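/- Let (J, m) be a laminar MaxT instance (i.e., the family {χ_j : j ∈ J} of job time windows is laminar), let λ ∈ (0,1) satisfy p_j ≤ λ·|χ_j| for every job j ∈ J, and let W denote the maximum of Σ_{j∈S} w_j over all feasibly schedulable subsets S ⊆ J. Then for every ω ∈ (0, 1 − λ/m], there exists a subset S ⊆ J such that Σ_{j∈S} w_j ≥ ω·W and, for every interval χ ∈ {χ_j : j ∈ J}, Σ_{j∈S : χ_j ⊆ χ} a_j ≤ (ω + λ/m)·m·|χ|. -/

import Mathlib

open Finset MeasureTheory
open scoped Classical

/-- A subset `S` of jobs is feasibly schedulable on `m` identical hosts: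
for each job `j ∈ S` one can pick a set of exactly `p j` time slots inside its
time window `[r j, d j]` and a host for each chosen slot, so that at every host
and every time slot, the total size of jobs running there is at most `1`. -/
def Schedulable {ι : Type*} (m : ℕ) (r d : ι → ℤ) (p : ι → ℕ) (s : ι → ℝ)
    (S : Finset ι) : Prop :=
  ∃ (Tj : ι → Finset ℤ) (h : ι → ℤ → Fin m),
    (∀ j ∈ S, Tj j ⊆ Finset.Icc (r j) (d j) ∧ (Tj j).card = p j) ∧
    ∀ (i : Fin m) (t : ℤ),
      ∑ j ∈ S.filter (fun j => t ∈ Tj j ∧ h j t = i), s j ≤ 1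

/-- The family of time windows `{[r j, d j] : j}` is laminar. -/
def LaminarWindows {ι : Type*} (r d : ι → ℤ) : Prop :=
  ∀ j k : ι,
    Finset.Icc (r j) (d j) ⊆ Finset.Icc (r k) (d k) ∨
    Finset.Icc (r k) (d k) ⊆ Finset.Icc (r j) (d j) ∨
    Disjoint (Finset.Icc (r j) (d j)) (Finset.Icc (r k) (d k))

noncomputable def greedyAux {ι : Type*} (cond : Finset ι → ι → Prop) :
    List ι → Finset ι → Finset ι
  | [], S => S
  | j :: l, S => greedyAux cond l (if cond S j then insert j S else S)

lemma greedyAux_nil {ι : Type*} (cond : Finset ι → ι → Prop) (S : Finset ι) :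
    greedyAux cond [] S = S := rfl

lemma greedyAux_cons {ι : Type*} (cond : Finset ι → ι → Prop) (j : ι) (l : List ι)
    (S : Finset ι) :
    greedyAux cond (j :: l) S = greedyAux cond l (if cond S j then insert j S else S) := rfl

/-- invariant preservation for the greedy procedure -/
lemma greedyAux_inv {ι : Type*} (cond : Finset ι → ι → Prop) (Inv : Finset ι → Prop)
    (hmono : ∀ S j, Inv S → cond S j → Inv (insert j S)) :
    ∀ (l : List ι) (S : Finset ι), Inv S → Inv (greedyAux cond l S) := by
  intro l
  induction l with
  | nil => intro S hS; simpa [greedyAux_nil] using hS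
  | cons j l ih =>
    intro S hS
    rw [greedyAux_cons]
    by_cases h : cond S j
    · simp only [if_pos h]
      exact ih _ (hmono _ _ hS h)
    · simp only [if_neg h]
      exact ih _ hS

lemma greedyAux_spec {ι : Type*} (cond : Finset ι → ι → Prop) (ρ : ι → ℝ) :
    ∀ (l : List ι) (S₀ : Finset ι), l.Nodup → (∀ j ∈ l, j ∉ S₀) →
    l.Pairwise (fun i j => ρ j ≤ ρ i) → (∀ i ∈ S₀, ∀ j ∈ l, ρ j ≤ ρ i) →
    S₀ ⊆ greedyAux cond l S₀ ∧ greedyAux cond l S₀ ⊆ S₀ ∪ l.toFinset ∧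
    (∀ j ∈ l, j ∉ greedyAux cond l S₀ →
      ∃ S', S' ⊆ greedyAux cond l S₀ ∧ (∀ i ∈ S', ρ j ≤ ρ i) ∧ ¬ cond S' j) := by
  intro l
  induction l with
  | nil =>
    intro S₀ _ _ _ _
    refine ⟨subset_rfl, ?_, ?_⟩
    · simp [greedyAux_nil]
    · intro j hj; simp at hj
  | cons j l ih =>
    intro S₀ hnd hdisj hsort hS₀
    have hndl : l.Nodup := (List.nodup_cons.mp hnd).2
    have hjl : j ∉ l := (List.nodup_cons.mp hnd).1
    have hsortl : l.Pairwise (fun i j => ρ j ≤ ρ i) := hsort.of_cons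
    have hjge : ∀ i ∈ l, ρ i ≤ ρ j := by
      intro i hi; exact (List.pairwise_cons.mp hsort).1 i hi
    rw [greedyAux_cons]
    by_cases h : cond S₀ j
    · simp only [if_pos h]
      have hdisj' : ∀ i ∈ l, i ∉ insert j S₀ := by
        intro i hi
        simp only [Finset.mem_insert]
        rintro (rfl | hiS₀)
        · exact hjl hi
        · exact hdisj i (List.mem_cons_of_mem _ hi) hiS₀
      have hS₀' : ∀ i ∈ insert j S₀, ∀ i' ∈ l, ρ i' ≤ ρ i := by
        intro i hi i' hi'
        rcases Finset.mem_insert.mp hi with rfl | hi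
        · exact hjge i' hi'
        · exact hS₀ i hi i' (List.mem_cons_of_mem _ hi')
      obtain ⟨h1, h2, h3⟩ := ih (insert j S₀) hndl hdisj' hsortl hS₀'
      refine ⟨?_, ?_, ?_⟩
      · exact (Finset.subset_insert j S₀).trans h1
      · refine h2.trans ?_
        intro x hx
        rcases Finset.mem_union.mp hx with hx | hx
        · rcases Finset.mem_insert.mp hx with rfl | hx
          · simp
          · exact Finset.mem_union_left _ hx
        · simp only [Finset.mem_union, List.mem_toFinset] at *
          right; exact List.mem_cons_of_mem _ hx
      · intro j' hj' hj'n
        rcases List.mem_cons.mp hj' with rfl | hj'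
        · exact absurd (h1 (Finset.mem_insert_self j' S₀)) hj'n
        · exact h3 j' hj' hj'n
    · simp only [if_neg h]
      obtain ⟨h1, h2, h3⟩ := ih S₀ hndl
        (fun i hi => hdisj i (List.mem_cons_of_mem _ hi)) hsortl
        (fun i hi i' hi' => hS₀ i hi i' (List.mem_cons_of_mem _ hi'))
      refine ⟨h1, ?_, ?_⟩
      · refine h2.trans ?_
        intro x hx
        rcases Finset.mem_union.mp hx with hx | hx
        · exact Finset.mem_union_left _ hx
        · simp only [Finset.mem_union, List.mem_toFinset] at *
          right; exact List.mem_cons_of_mem _ hx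
      · intro j' hj' hj'n
        rcases List.mem_cons.mp hj' with rfl | hj'
        · refine ⟨S₀, h1, ?_, h⟩
          intro i hi
          exact hS₀ i hi j' List.mem_cons_self
        · exact h3 j' hj' hj'n

lemma exists_sorted_list {ι : Type*} (ρ : ι → ℝ) (O : Finset ι) :
    ∃ l : List ι, l.Nodup ∧ l.toFinset = O ∧ l.Pairwise (fun i j => ρ j ≤ ρ i) := by
  induction O using Finset.strongInduction with
  | _ O ih =>
    rcases O.eq_empty_or_nonempty with rfl | hne
    · exact ⟨[], by simp⟩
    · obtain ⟨b, hb, hbmax⟩ := O.exists_max_image ρ hne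
      obtain ⟨l, hnd, hfs, hsort⟩ := ih (O.erase b) (Finset.erase_ssubset hb)
      refine ⟨b :: l, ?_, ?_, ?_⟩
      · refine List.nodup_cons.mpr ⟨?_, hnd⟩
        intro hbl
        have : b ∈ O.erase b := hfs ▸ List.mem_toFinset.mpr hbl
        simp at this
      · simp [hfs, Finset.insert_erase hb]
      · refine List.pairwise_cons.mpr ⟨?_, hsort⟩
        intro i hi
        have : i ∈ O.erase b := hfs ▸ List.mem_toFinset.mpr hi
        exact hbmax i (Finset.mem_of_mem_erase this)

lemma exists_maximal_superset (𝓦 : Finset (Finset ℤ)) {I : Finset ℤ} (hI : I ∈ 𝓦) :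
    ∃ I' ∈ 𝓦, I ⊆ I' ∧ ∀ I'' ∈ 𝓦, I' ⊆ I'' → I' = I'' := by
  obtain ⟨I', hI', hmax⟩ := Finset.exists_maximal (s := 𝓦.filter (fun J => I ⊆ J))
    ⟨I, Finset.mem_filter.mpr ⟨hI, subset_rfl⟩⟩
  rw [Finset.mem_filter] at hI'
  refine ⟨I', hI'.1, hI'.2, ?_⟩
  intro I'' hI'' hsub
  by_contra hne
  exact hne (le_antisymm hsub (hmax (Finset.mem_filter.mpr ⟨hI'', hI'.2.trans hsub⟩) hsub))

lemma layer_cake_compare {ι : Type*} (R S : Finset ι) (a ρ : ι → ℝ) (c₁ c₂ : ℝ)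
    (ha : ∀ j, 0 ≤ a j) (hρR : ∀ j ∈ R, 0 ≤ ρ j) (hρS : ∀ j ∈ S, 0 ≤ ρ j)
    (hc : ∀ t : ℝ, 0 < t →
      c₁ * ∑ j ∈ R.filter (fun j => t ≤ ρ j), a j ≤
      c₂ * ∑ j ∈ S.filter (fun j => t ≤ ρ j), a j) :
    c₁ * ∑ j ∈ R, a j * ρ j ≤ c₂ * ∑ j ∈ S, a j * ρ j := by
  set f : ι → ℝ → ℝ := fun j t => Set.indicator (Set.Ioc 0 (ρ j)) (fun _ => a j) t with hf
  have hint : ∀ j, Integrable (f j) := by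
    intro j
    rw [hf]
    rw [integrable_indicator_iff measurableSet_Ioc]
    exact integrableOn_const measure_Ioc_lt_top.ne
  have hsum : ∀ (X : Finset ι), (∀ j ∈ X, 0 ≤ ρ j) →
      ∫ t, ∑ j ∈ X, f j t = ∑ j ∈ X, a j * ρ j := by
    intro X hX
    rw [integral_finset_sum X (fun j _ => hint j)]
    refine Finset.sum_congr rfl ?_
    intro j hj
    rw [hf]
    simp only []
    rw [integral_indicator_const (a j) measurableSet_Ioc, Real.volume_real_Ioc_of_le (hX j hj),
      smul_eq_mul, sub_zero, mul_comm]
  have hpt : ∀ t, c₁ * ∑ j ∈ R, f j t ≤ c₂ * ∑ j ∈ S, f j t := by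
    intro t
    rcases le_or_gt t 0 with ht | ht
    · have hz : ∀ (X : Finset ι), ∑ j ∈ X, f j t = 0 := by
        intro X
        refine Finset.sum_eq_zero ?_
        intro j _
        rw [hf]
        exact Set.indicator_of_notMem (by simp [Set.mem_Ioc]; intro h; linarith) _
      rw [hz, hz]; simp
    · have hfil : ∀ (X : Finset ι), ∑ j ∈ X, f j t =
          ∑ j ∈ X.filter (fun j => t ≤ ρ j), a j := by
        intro X
        rw [Finset.sum_filter]
        refine Finset.sum_congr rfl ?_
        intro j _
        rw [hf]
        simp only [Set.indicator_apply, Set.mem_Ioc]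
        by_cases hj : t ≤ ρ j <;> simp [hj, ht]
      rw [hfil, hfil]
      exact hc t ht
  have hiR : Integrable (fun t => c₁ * ∑ j ∈ R, f j t) :=
    (integrable_finset_sum R (fun j _ => hint j)).const_mul c₁
  have hiS : Integrable (fun t => c₂ * ∑ j ∈ S, f j t) :=
    (integrable_finset_sum S (fun j _ => hint j)).const_mul c₂
  have := integral_mono hiR hiS hpt
  rwa [integral_const_mul, integral_const_mul, hsum R hρR, hsum S hρS] at this

lemma capacity_lemma {ι : Type*} (m : ℕ) (r d : ι → ℤ) (p : ι → ℕ) (s : ι → ℝ)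
    (hs0 : ∀ j, 0 ≤ s j) (O : Finset ι) (hO : Schedulable m r d p s O) (k : ι) :
    ∑ j ∈ O.filter (fun j => Finset.Icc (r j) (d j) ⊆ Finset.Icc (r k) (d k)),
      (p j : ℝ) * s j ≤ (m : ℝ) * ((Finset.Icc (r k) (d k)).card : ℝ) := by
  obtain ⟨T, h, hT, hload⟩ := hO
  set I := Finset.Icc (r k) (d k) with hI
  set O' := O.filter (fun j => Finset.Icc (r j) (d j) ⊆ I) with hO'
  have hstep : ∀ j ∈ O', (p j : ℝ) * s j = ∑ t ∈ I, (if t ∈ T j then s j else 0) := by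
    intro j hj
    rw [Finset.mem_filter] at hj
    have hTsub : T j ⊆ I := (hT j hj.1).1.trans hj.2
    rw [Finset.sum_ite_mem]
    have : I ∩ T j = T j := Finset.inter_eq_right.mpr hTsub
    rw [this, Finset.sum_const, (hT j hj.1).2, nsmul_eq_mul]
  calc ∑ j ∈ O', (p j : ℝ) * s j
      = ∑ j ∈ O', ∑ t ∈ I, (if t ∈ T j then s j else 0) := Finset.sum_congr rfl hstep
    _ = ∑ t ∈ I, ∑ j ∈ O', (if t ∈ T j then s j else 0) := Finset.sum_comm
    _ ≤ ∑ t ∈ I, (m : ℝ) := by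
        refine Finset.sum_le_sum ?_
        intro t _
        rw [← Finset.sum_filter]
        have hfib := Finset.sum_fiberwise (O'.filter (fun j => t ∈ T j)) (fun j => h j t) s
        rw [← hfib]
        calc ∑ i : Fin m, ∑ j ∈ (O'.filter (fun j => t ∈ T j)).filter (fun j => h j t = i), s j
            ≤ ∑ i : Fin m, (1 : ℝ) := by
              refine Finset.sum_le_sum ?_
              intro i _
              refine le_trans (Finset.sum_le_sum_of_subset_of_nonneg ?_ (fun j _ _ => hs0 j)) (hload i t)
              intro j hj
              simp only [hO', Finset.mem_filter] at hj ⊢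
              exact ⟨hj.1.1.1, hj.1.2, hj.2⟩
          _ = (m : ℝ) := by simp
    _ = (m : ℝ) * (I.card : ℝ) := by rw [Finset.sum_const, nsmul_eq_mul, mul_comm]

theorem main_work {ι : Type*}
    (m : ℕ) (r d : ι → ℤ) (a w : ι → ℝ)
    (hrd : ∀ j, r j ≤ d j)
    (ha_pos : ∀ j, 0 < a j) (hw : ∀ j, 0 < w j)
    (hlamin : LaminarWindows r d)
    (lam : ℝ) (hlam0 : 0 < lam)
    (haL : ∀ j, a j ≤ lam * ((Finset.Icc (r j) (d j)).card : ℝ))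
    (ω : ℝ) (hω0 : 0 < ω) (hω1 : ω ≤ 1)
    (O : Finset ι)
    (hcap : ∀ k : ι,
      ∑ j ∈ O.filter (fun j => Finset.Icc (r j) (d j) ⊆ Finset.Icc (r k) (d k)), a j
        ≤ (m : ℝ) * ((Finset.Icc (r k) (d k)).card : ℝ)) :
    ∃ S : Finset ι, S ⊆ O ∧
      ω * ∑ j ∈ O, w j ≤ ∑ j ∈ S, w j ∧
      ∀ k : ι,
        ∑ j ∈ S.filter (fun j => Finset.Icc (r j) (d j) ⊆ Finset.Icc (r k) (d k)), a j
          ≤ ω * m * ((Finset.Icc (r k) (d k)).card : ℝ)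
            + lam * ((Finset.Icc (r k) (d k)).card : ℝ) := by
  set ρ : ι → ℝ := fun j => w j / a j with hρ_def
  have hρpos : ∀ j, 0 < ρ j := fun j => div_pos (hw j) (ha_pos j)
  have hwρ : ∀ j, w j = a j * ρ j := by
    intro j
    rw [hρ_def]
    show w j = a j * (w j / a j)
    rw [mul_comm, div_mul_cancel₀ _ (ha_pos j).ne']
  set L : ι → ℝ := fun k => ((Finset.Icc (r k) (d k)).card : ℝ) with hL_def
  have hL_pos : ∀ k, 0 < L k := by
    intro k
    have h1 : (Finset.Icc (r k) (d k)).Nonempty := Finset.nonempty_Icc.mpr (hrd k)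
    have h2 := Finset.card_pos.mpr h1
    have h3 : L k = ((Finset.Icc (r k) (d k)).card : ℝ) := rfl
    rw [h3]
    exact_mod_cast h2
  have haLk : ∀ j k : ι, Finset.Icc (r j) (d j) ⊆ Finset.Icc (r k) (d k) →
      a j ≤ lam * L k := by
    intro j k hsub
    refine (haL j).trans ?_
    have : L j ≤ L k := by
      have e1 : L j = ((Finset.Icc (r j) (d j)).card : ℝ) := rfl
      have e2 : L k = ((Finset.Icc (r k) (d k)).card : ℝ) := rfl
      rw [e1, e2]
      exact_mod_cast Finset.card_le_card hsub
    nlinarith [hL_pos j]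
  set c : ι → ℝ := fun k => ω * m * L k + lam * L k with hc_def
  set cond : Finset ι → ι → Prop := fun S j => ∀ k : ι,
    Finset.Icc (r j) (d j) ⊆ Finset.Icc (r k) (d k) →
    (∑ i ∈ S.filter (fun i => Finset.Icc (r i) (d i) ⊆ Finset.Icc (r k) (d k)), a i) + a j ≤ c k
    with hcond_def
  obtain ⟨l, hnd, hlfs, hsort⟩ := exists_sorted_list ρ O
  set S := greedyAux cond l ∅ with hS_def
  -- feasibility of S
  have hInvS : ∀ k : ι,
      ∑ i ∈ S.filter (fun i => Finset.Icc (r i) (d i) ⊆ Finset.Icc (r k) (d k)), a i ≤ c k := by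
    refine greedyAux_inv cond
      (fun X => ∀ k : ι,
        ∑ i ∈ X.filter (fun i => Finset.Icc (r i) (d i) ⊆ Finset.Icc (r k) (d k)), a i ≤ c k)
      ?_ l ∅ ?_
    · intro X j hX hcondj k
      by_cases hjX : j ∈ X
      · rw [Finset.insert_eq_self.mpr hjX]
        exact hX k
      · rw [Finset.filter_insert]
        by_cases hsub : Finset.Icc (r j) (d j) ⊆ Finset.Icc (r k) (d k)
        · rw [if_pos hsub, Finset.sum_insert (fun hc => hjX (Finset.mem_of_mem_filter j hc))]
          have := hcondj k hsub
          linarith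
        · rw [if_neg hsub]
          exact hX k
    · intro k
      simp only [Finset.filter_empty, Finset.sum_empty, hc_def]
      have := hL_pos k
      exact add_nonneg (mul_nonneg (mul_nonneg hω0.le (Nat.cast_nonneg _)) this.le) (mul_nonneg hlam0.le this.le)
  obtain ⟨-, hSsub, hrej⟩ := greedyAux_spec cond ρ l ∅ hnd (by simp) hsort (by simp)
  have hSO : S ⊆ O := by
    rw [hS_def]
    refine hSsub.trans ?_
    rw [Finset.empty_union, hlfs]
  -- witness property for rejected jobs
  have hWit : ∀ j ∈ O \ S, ∃ k : ι, Finset.Icc (r j) (d j) ⊆ Finset.Icc (r k) (d k) ∧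
      ω * m * L k ≤ ∑ i ∈ (S.filter (fun i => ρ j ≤ ρ i)).filter
        (fun i => Finset.Icc (r i) (d i) ⊆ Finset.Icc (r k) (d k)), a i := by
    intro j hj
    obtain ⟨hjO, hjS⟩ := Finset.mem_sdiff.mp hj
    have hjl : j ∈ l := by
      rw [← hlfs] at hjO
      exact List.mem_toFinset.mp hjO
    obtain ⟨S', hS'sub, hS'ρ, hncond⟩ := hrej j hjl (by rw [← hS_def] at *; exact hjS)
    have hncond' : ∃ k : ι, Finset.Icc (r j) (d j) ⊆ Finset.Icc (r k) (d k) ∧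
        c k < (∑ i ∈ S'.filter (fun i => Finset.Icc (r i) (d i) ⊆ Finset.Icc (r k) (d k)), a i)
          + a j := by
      by_contra hno
      push_neg at hno
      exact hncond hno
    obtain ⟨k, hsub, hgt⟩ := hncond'
    refine ⟨k, hsub, ?_⟩
    have h2 : ω * m * L k ≤ c k - a j := by
      have := haLk j k hsub
      rw [hc_def]
      simp only []
      linarith
    have h3 : S' ⊆ S.filter (fun i => ρ j ≤ ρ i) := by
      intro i hi
      exact Finset.mem_filter.mpr ⟨hS'sub hi, hS'ρ i hi⟩
    have h4 : ∑ i ∈ S'.filter (fun i => Finset.Icc (r i) (d i) ⊆ Finset.Icc (r k) (d k)), a i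
        ≤ ∑ i ∈ (S.filter (fun i => ρ j ≤ ρ i)).filter
          (fun i => Finset.Icc (r i) (d i) ⊆ Finset.Icc (r k) (d k)), a i :=
      Finset.sum_le_sum_of_subset_of_nonneg
        (Finset.filter_subset_filter _ h3) (fun i _ _ => (ha_pos i).le)
    linarith
  -- threshold inequality
  have TL : ∀ t : ℝ, 0 < t →
      ω * ∑ j ∈ (O \ S).filter (fun j => t ≤ ρ j), a j ≤
      (1 - ω) * ∑ j ∈ S.filter (fun j => t ≤ ρ j), a j := by
    intro t ht
    set Rt := (O \ S).filter (fun j => t ≤ ρ j) with hRt_def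
    set St := S.filter (fun j => t ≤ ρ j) with hSt_def
    have hWit' : ∀ j : ι, ∃ k : ι, j ∈ Rt →
        (Finset.Icc (r j) (d j) ⊆ Finset.Icc (r k) (d k) ∧
        ω * m * L k ≤ ∑ i ∈ St.filter
          (fun i => Finset.Icc (r i) (d i) ⊆ Finset.Icc (r k) (d k)), a i) := by
      intro j
      by_cases hj : j ∈ Rt
      · have hjR : j ∈ O \ S := (Finset.mem_filter.mp hj).1
        have hjt : t ≤ ρ j := (Finset.mem_filter.mp hj).2
        obtain ⟨k, hsub, hineq⟩ := hWit j hjR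
        refine ⟨k, fun _ => ⟨hsub, ?_⟩⟩
        refine hineq.trans ?_
        refine Finset.sum_le_sum_of_subset_of_nonneg ?_ (fun i _ _ => (ha_pos i).le)
        refine Finset.filter_subset_filter _ ?_
        intro i hi
        obtain ⟨hiS, hiρ⟩ := Finset.mem_filter.mp hi
        exact Finset.mem_filter.mpr ⟨hiS, le_trans hjt hiρ⟩
      · exact ⟨j, fun h => absurd h hj⟩
    choose K hK using hWit'
    set 𝓦 : Finset (Finset ℤ) := Rt.image (fun j => Finset.Icc (r (K j)) (d (K j))) with h𝓦
    set M := 𝓦.filter (fun I => ∀ I' ∈ 𝓦, I ⊆ I' → I = I') with hM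
    have hcover : ∀ j ∈ Rt, ∃ I ∈ M, Finset.Icc (r j) (d j) ⊆ I := by
      intro j hj
      obtain ⟨I', hI'W, hI'sup, hI'max⟩ :=
        exists_maximal_superset 𝓦 (Finset.mem_image_of_mem (fun j => Finset.Icc (r (K j)) (d (K j))) hj)
      refine ⟨I', Finset.mem_filter.mpr ⟨hI'W, hI'max⟩, ?_⟩
      exact ((hK j hj).1).trans hI'sup
    have hMwit : ∀ I ∈ M, ∃ k : ι, I = Finset.Icc (r k) (d k) ∧
        ω * m * L k ≤ ∑ i ∈ St.filter (fun i => Finset.Icc (r i) (d i) ⊆ I), a i := by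
      intro I hI
      obtain ⟨j, hjRt, hjI⟩ := Finset.mem_image.mp (Finset.mem_filter.mp hI).1
      refine ⟨K j, hjI.symm, ?_⟩
      rw [← hjI]
      exact (hK j hjRt).2
    have hMdisj : ∀ I ∈ M, ∀ I' ∈ M, I ≠ I' → Disjoint I I' := by
      intro I hI I' hI' hne
      obtain ⟨k, hk, -⟩ := hMwit I hI
      obtain ⟨k', hk', -⟩ := hMwit I' hI'
      have hImax := (Finset.mem_filter.mp hI).2
      have hI'max := (Finset.mem_filter.mp hI').2
      have hIW := (Finset.mem_filter.mp hI).1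
      have hI'W := (Finset.mem_filter.mp hI').1
      rcases hlamin k k' with h | h | h
      · exact absurd (hImax I' hI'W (by rw [hk, hk']; exact h)) hne
      · exact absurd (hI'max I hIW (by rw [hk, hk']; exact h)).symm hne
      · rw [hk, hk']; exact h
    have hjobdisj : ∀ (X : Finset ι), (↑M : Set (Finset ℤ)).PairwiseDisjoint
        (fun I => X.filter (fun j => Finset.Icc (r j) (d j) ⊆ I)) := by
      intro X I hI I' hI' hne
      refine Finset.disjoint_left.mpr ?_
      intro j hj hj'
      have h1 : Finset.Icc (r j) (d j) ⊆ I := (Finset.mem_filter.mp hj).2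
      have h2 : Finset.Icc (r j) (d j) ⊆ I' := (Finset.mem_filter.mp hj').2
      have hd := hMdisj I hI I' hI' hne
      have hsub : Finset.Icc (r j) (d j) ⊆ I ∩ I' := Finset.subset_inter h1 h2
      rw [Finset.disjoint_iff_inter_eq_empty.mp hd, Finset.subset_empty] at hsub
      have hne' : (Finset.Icc (r j) (d j)).Nonempty := Finset.nonempty_Icc.mpr (hrd j)
      rw [hsub] at hne'
      exact Finset.not_nonempty_empty hne'
    have hsplitS : ∑ I ∈ M, ∑ j ∈ St.filter (fun j => Finset.Icc (r j) (d j) ⊆ I), a j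
        ≤ ∑ j ∈ St, a j := by
      rw [← Finset.sum_biUnion (hjobdisj St)]
      refine Finset.sum_le_sum_of_subset_of_nonneg ?_ (fun i _ _ => (ha_pos i).le)
      intro j hj
      obtain ⟨I, hIM, hjI⟩ := Finset.mem_biUnion.mp hj
      exact (Finset.mem_filter.mp hjI).1
    have hsplitR : ∑ j ∈ Rt, a j
        ≤ ∑ I ∈ M, ∑ j ∈ Rt.filter (fun j => Finset.Icc (r j) (d j) ⊆ I), a j := by
      rw [← Finset.sum_biUnion (hjobdisj Rt)]
      refine Finset.sum_le_sum_of_subset_of_nonneg ?_ (fun i _ _ => (ha_pos i).le)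
      intro j hj
      obtain ⟨I, hIM, hsub⟩ := hcover j hj
      exact Finset.mem_biUnion.mpr ⟨I, hIM, Finset.mem_filter.mpr ⟨hj, hsub⟩⟩
    have hperI : ∀ I ∈ M,
        ω * ∑ j ∈ Rt.filter (fun j => Finset.Icc (r j) (d j) ⊆ I), a j ≤
        (1 - ω) * ∑ j ∈ St.filter (fun j => Finset.Icc (r j) (d j) ⊆ I), a j := by
      intro I hI
      obtain ⟨k, rfl, hwitk⟩ := hMwit I hI
      have hcapk := hcap k
      set P : ι → Prop := fun i => Finset.Icc (r i) (d i) ⊆ Finset.Icc (r k) (d k) with hP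
      have hdisjRS : Disjoint (Rt.filter P) (S.filter P) := by
        refine Finset.disjoint_left.mpr ?_
        intro j hj hj'
        have := (Finset.mem_filter.mp ((Finset.mem_filter.mp hj).1)).1
        exact (Finset.mem_sdiff.mp this).2 (Finset.mem_of_mem_filter j hj')
      have hsubO : Rt.filter P ∪ S.filter P ⊆ O.filter P := by
        intro j hj
        rcases Finset.mem_union.mp hj with hj | hj
        · obtain ⟨hj1, hj2⟩ := Finset.mem_filter.mp hj
          exact Finset.mem_filter.mpr
            ⟨(Finset.mem_sdiff.mp (Finset.mem_of_mem_filter j hj1)).1, hj2⟩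
        · obtain ⟨hj1, hj2⟩ := Finset.mem_filter.mp hj
          exact Finset.mem_filter.mpr ⟨hSO hj1, hj2⟩
      have hsum2 : ∑ j ∈ Rt.filter P, a j + ∑ j ∈ S.filter P, a j ≤ (m : ℝ) * L k := by
        rw [← Finset.sum_union hdisjRS]
        refine le_trans (Finset.sum_le_sum_of_subset_of_nonneg hsubO
          (fun i _ _ => (ha_pos i).le)) ?_
        rw [hL_def]
        exact hcapk
      have hStsub : ∑ j ∈ St.filter P, a j ≤ ∑ j ∈ S.filter P, a j :=
        Finset.sum_le_sum_of_subset_of_nonneg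
          (Finset.filter_subset_filter _ (Finset.filter_subset _ _)) (fun i _ _ => (ha_pos i).le)
      have hA : ∑ j ∈ Rt.filter P, a j ≤ (m : ℝ) * L k - ∑ j ∈ St.filter P, a j := by
        linarith
      have h1 : ω * ∑ j ∈ Rt.filter P, a j
          ≤ ω * ((m : ℝ) * L k - ∑ j ∈ St.filter P, a j) :=
        mul_le_mul_of_nonneg_left hA hω0.le
      have h2 : ω * ((m : ℝ) * L k) ≤ ∑ j ∈ St.filter P, a j := by
        rw [← mul_assoc]
        exact hwitk
      nlinarith
    calc ω * ∑ j ∈ Rt, a j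
        ≤ ω * ∑ I ∈ M, ∑ j ∈ Rt.filter (fun j => Finset.Icc (r j) (d j) ⊆ I), a j :=
          mul_le_mul_of_nonneg_left hsplitR hω0.le
      _ = ∑ I ∈ M, ω * ∑ j ∈ Rt.filter (fun j => Finset.Icc (r j) (d j) ⊆ I), a j :=
          Finset.mul_sum _ _ _
      _ ≤ ∑ I ∈ M, (1 - ω) * ∑ j ∈ St.filter (fun j => Finset.Icc (r j) (d j) ⊆ I), a j :=
          Finset.sum_le_sum hperI
      _ = (1 - ω) * ∑ I ∈ M, ∑ j ∈ St.filter (fun j => Finset.Icc (r j) (d j) ⊆ I), a j :=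
          (Finset.mul_sum _ _ _).symm
      _ ≤ (1 - ω) * ∑ j ∈ St, a j :=
          mul_le_mul_of_nonneg_left hsplitS (by linarith)
  -- from thresholds to weights
  have key : ω * ∑ j ∈ O \ S, w j ≤ (1 - ω) * ∑ j ∈ S, w j := by
    have hmain := layer_cake_compare (O \ S) S a ρ ω (1 - ω)
      (fun j => (ha_pos j).le) (fun j _ => (hρpos j).le) (fun j _ => (hρpos j).le) TL
    have e1 : ∑ j ∈ O \ S, w j = ∑ j ∈ O \ S, a j * ρ j :=
      Finset.sum_congr rfl (fun j _ => hwρ j)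
    have e2 : ∑ j ∈ S, w j = ∑ j ∈ S, a j * ρ j :=
      Finset.sum_congr rfl (fun j _ => hwρ j)
    rw [e1, e2]
    exact hmain
  have hsplitW : ∑ j ∈ O \ S, w j + ∑ j ∈ S, w j = ∑ j ∈ O, w j := Finset.sum_sdiff hSO
  refine ⟨S, hSO, ?_, ?_⟩
  · nlinarith [key, hsplitW]
  · intro k
    have := hInvS k
    rw [hc_def] at this
    exact this

theorem stmt_0 {ι : Type*} [Fintype ι]
    (m : ℕ) (hm : 1 ≤ m)
    (r d : ι → ℤ) (p : ι → ℕ) (s w : ι → ℝ)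
    (hrd : ∀ j, r j ≤ d j)
    (hp1 : ∀ j, 1 ≤ p j)
    (hpw : ∀ j, (p j : ℤ) ≤ d j - r j + 1)
    (hs0 : ∀ j, 0 < s j) (hs1 : ∀ j, s j ≤ 1)
    (hw : ∀ j, 0 < w j)
    (hlamin : LaminarWindows r d)
    (lam : ℝ) (hlam0 : 0 < lam) (hlam1 : lam < 1)
    (hslack : ∀ j, (p j : ℝ) ≤ lam * ((d j - r j + 1 : ℤ) : ℝ))
    (W : ℝ)
    (hWach : ∃ O : Finset ι, Schedulable m r d p s O ∧ ∑ j ∈ O, w j = W)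
    (hWmax : ∀ O : Finset ι, Schedulable m r d p s O → ∑ j ∈ O, w j ≤ W)
    (ω : ℝ) (hω0 : 0 < ω) (hω1 : ω ≤ 1 - lam / m) :
    ∃ S : Finset ι,
      ω * W ≤ ∑ j ∈ S, w j ∧
      ∀ k : ι,
        ∑ j ∈ S.filter (fun j => Finset.Icc (r j) (d j) ⊆ Finset.Icc (r k) (d k)),
            (p j : ℝ) * s j
          ≤ (ω + lam / m) * m * ((d k - r k + 1 : ℤ) : ℝ) := by
  obtain ⟨O, hOsched, hOW⟩ := hWach
  have hm0 : (0 : ℝ) < (m : ℝ) := by exact_mod_cast Nat.lt_of_lt_of_le Nat.zero_lt_one hm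
  have hω1' : ω ≤ 1 := by
    refine hω1.trans ?_
    have : 0 ≤ lam / m := by positivity
    linarith
  have ha_pos : ∀ j, 0 < (p j : ℝ) * s j := by
    intro j
    have h1 : (1 : ℝ) ≤ (p j : ℝ) := by exact_mod_cast hp1 j
    exact mul_pos (by linarith) (hs0 j)
  have hcard : ∀ k : ι, ((Finset.Icc (r k) (d k)).card : ℝ) = ((d k - r k + 1 : ℤ) : ℝ) := by
    intro k
    have h0 : (0 : ℤ) ≤ d k + 1 - r k := by linarith [hrd k]
    rw [Int.card_Icc]
    rw [show (((d k + 1 - r k).toNat : ℕ) : ℝ) = ((((d k + 1 - r k).toNat : ℕ) : ℤ) : ℝ) from by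
      push_cast; ring]
    rw [Int.toNat_of_nonneg h0]
    push_cast
    ring
  have haL : ∀ j, (p j : ℝ) * s j ≤ lam * ((Finset.Icc (r j) (d j)).card : ℝ) := by
    intro j
    have h1 : (p j : ℝ) * s j ≤ (p j : ℝ) := by
      have hp0 : (0 : ℝ) ≤ (p j : ℝ) := Nat.cast_nonneg _
      nlinarith [hs0 j, hs1 j]
    rw [hcard j]
    exact h1.trans (hslack j)
  have hcap : ∀ k : ι,
      ∑ j ∈ O.filter (fun j => Finset.Icc (r j) (d j) ⊆ Finset.Icc (r k) (d k)),
        (p j : ℝ) * s j ≤ (m : ℝ) * ((Finset.Icc (r k) (d k)).card : ℝ) :=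
    fun k => capacity_lemma m r d p s (fun j => (hs0 j).le) O hOsched k
  obtain ⟨S, hSO, hSw, hSarea⟩ := main_work m r d (fun j => (p j : ℝ) * s j) w hrd
    ha_pos hw hlamin lam hlam0 haL ω hω0 hω1' O hcap
  refine ⟨S, ?_, ?_⟩
  · rw [← hOW]
    exact hSw
  · intro k
    have h1 := hSarea k
    rw [hcard k] at h1
    have h2 : ω * m * ((d k - r k + 1 : ℤ) : ℝ) + lam * ((d k - r k + 1 : ℤ) : ℝ)
        = (ω + lam / m) * m * ((d k - r k + 1 : ℤ) : ℝ) := by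
      field_simp
    linarith
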